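/- Suppose a sequence of finitely supported probability distributions (μᵢ)_{i=0}^∞ on a set X converges in the sup-norm metric to a distribution μ. Then there exist a sequence of distributions (μ′ᵢ)_{i=0}^∞ in Distr(X) and a sequence of reals (rᵢ)_{i=0}^∞ in [0,1] such that μᵢ = (1 − rᵢ)·μ ⊕ rᵢ·μ′ᵢ (i.e., μᵢ(x) = (1−rᵢ)μ(x) + rᵢμ′ᵢ(x) for all x) for every i ∈ ℕ, and lim_{i→∞} rᵢ = 0. -/

import Mathlib

/-- A finitely supported probability distribution on `X`. -/
def IsDistr {X : Type*} (μ : X → ℝ) : Prop :=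
  (∀ x, 0 ≤ μ x) ∧ (Function.support μ).Finite ∧ ∑ᶠ x, μ x = 1

/-- Convergence in the sup-norm (Chebyshev) metric, stated as uniform convergence. -/
def UConv {X : Type*} (μs : ℕ → X → ℝ) (μ : X → ℝ) : Prop :=
  ∀ ε > 0, ∃ N, ∀ i ≥ N, ∀ x, |μs i x - μ x| < ε

/-- If `f ≤ g` pointwise, both have finite support and equal finsums, they are equal. -/
lemma eq_of_le_of_finsum_eq {X : Type*} {f g : X → ℝ}
    (hf : (Function.support f).Finite) (hg : (Function.support g).Finite)
    (hle : ∀ x, f x ≤ g x) (hs : ∑ᶠ x, f x = ∑ᶠ x, g x) : ∀ x, f x = g x := by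
  classical
  set F : Finset X := hf.toFinset ∪ hg.toFinset with hF
  have hsubf : Function.support f ⊆ (F : Set X) := by
    intro x hx; simp [hF, Set.Finite.mem_toFinset, hx]
  have hsubg : Function.support g ⊆ (F : Set X) := by
    intro x hx; simp [hF, Set.Finite.mem_toFinset, hx]
  have hf' : ∑ᶠ x, f x = ∑ x ∈ F, f x := finsum_eq_sum_of_support_subset f hsubf
  have hg' : ∑ᶠ x, g x = ∑ x ∈ F, g x := finsum_eq_sum_of_support_subset g hsubg
  have hsum0 : ∑ x ∈ F, (g x - f x) = 0 := by
    rw [Finset.sum_sub_distrib, ← hf', ← hg', hs, sub_self]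
  have hz := (Finset.sum_eq_zero_iff_of_nonneg (fun x _ => sub_nonneg.2 (hle x))).1 hsum0
  intro x
  by_cases hx : x ∈ F
  · have := hz x hx; linarith
  · have hfx : f x = 0 := by
      by_contra h; exact hx (hsubf h)
    have hgx : g x = 0 := by
      by_contra h; exact hx (hsubg h)
    rw [hfx, hgx]

/-- representation of the limit: if `μᵢ → μ` in sup-norm, then there
are distributions `μ′ᵢ` and reals `rᵢ ∈ [0,1]` with
`μᵢ = (1 − rᵢ)·μ ⊕ rᵢ·μ′ᵢ` pointwise for every `i`, and `rᵢ → 0`. -/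
theorem representation_of_limit {X : Type*} (μs : ℕ → X → ℝ) (μ : X → ℝ)
    (hμs : ∀ i, IsDistr (μs i)) (hμ : IsDistr μ) (hconv : UConv μs μ) :
    ∃ (μ' : ℕ → X → ℝ) (r : ℕ → ℝ),
      (∀ i, IsDistr (μ' i)) ∧ (∀ i, 0 ≤ r i ∧ r i ≤ 1) ∧
      (∀ i x, μs i x = (1 - r i) * μ x + r i * μ' i x) ∧
      Filter.Tendsto r Filter.atTop (nhds 0) := by
  classical
  obtain ⟨hμpos, hμfin, hμsum⟩ := hμ
  -- support of μ is nonempty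
  have hne : (Function.support μ).Nonempty := by
    rcases Set.eq_empty_or_nonempty (Function.support μ) with h | h
    · exfalso
      have : ∑ᶠ x, μ x = 0 := finsum_eq_zero_of_forall_eq_zero (fun x => by
        by_contra hx
        exact (Set.eq_empty_iff_forall_notMem.1 h x) hx)
      rw [hμsum] at this; norm_num at this
    · exact h
  have hTne : hμfin.toFinset.Nonempty := by
    obtain ⟨x, hx⟩ := hne
    exact ⟨x, hμfin.mem_toFinset.2 hx⟩
  set m : ℝ := hμfin.toFinset.inf' hTne μ with hm
  have hmpos : 0 < m := by
    rw [hm, Finset.lt_inf'_iff]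
    intro x hx
    have hx' : μ x ≠ 0 := (hμfin.mem_toFinset.1 hx)
    exact lt_of_le_of_ne (hμpos x) (Ne.symm hx')
  have hmle : ∀ x, μ x ≠ 0 → m ≤ μ x := by
    intro x hx
    exact Finset.inf'_le μ (hμfin.mem_toFinset.2 hx)
  -- The set of admissible r
  set S : ℕ → Set ℝ := fun i => {r | r ∈ Set.Icc (0:ℝ) 1 ∧ ∀ x, (1 - r) * μ x ≤ μs i x}
    with hS
  have hSne : ∀ i, (S i).Nonempty := by
    intro i
    refine ⟨1, ⟨by norm_num, fun x => ?_⟩⟩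
    simpa using (hμs i).1 x
  have hSbdd : ∀ i, BddBelow (S i) := fun i => ⟨0, fun r hr => hr.1.1⟩
  have hSclosed : ∀ i, IsClosed (S i) := by
    intro i
    have : S i = Set.Icc (0:ℝ) 1 ∩ ⋂ x, {r : ℝ | (1 - r) * μ x ≤ μs i x} := by
      ext r; simp [hS, Set.mem_iInter]
    rw [this]
    exact isClosed_Icc.inter (isClosed_iInter fun x =>
      isClosed_le (((continuous_const.sub continuous_id).mul continuous_const)) continuous_const)
  set r : ℕ → ℝ := fun i => sInf (S i) with hr
  have hrmem : ∀ i, r i ∈ S i := fun i => (hSclosed i).csInf_mem (hSne i) (hSbdd i)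
  have hr01 : ∀ i, 0 ≤ r i ∧ r i ≤ 1 := fun i => ⟨(hrmem i).1.1, (hrmem i).1.2⟩
  -- definition of μ'
  set μ' : ℕ → X → ℝ := fun i x =>
    if r i = 0 then μ x else (μs i x - (1 - r i) * μ x) / r i with hμ'
  refine ⟨μ', r, ?_, hr01, ?_, ?_⟩
  · -- each μ' i is a distribution
    intro i
    by_cases h0 : r i = 0
    · simp only [hμ', h0, if_true]
      exact ⟨hμpos, hμfin, hμsum⟩
    · have hrpos : 0 < r i := lt_of_le_of_ne (hr01 i).1 (Ne.symm h0)
      have hnum : ∀ x, 0 ≤ μs i x - (1 - r i) * μ x := fun x =>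
        sub_nonneg.2 ((hrmem i).2 x)
      have hsupp : Function.support (μ' i) ⊆
          Function.support (μs i) ∪ Function.support μ := by
        intro x hx
        by_contra hc
        simp only [Set.mem_union, Function.mem_support, not_or, not_not] at hc
        apply hx
        simp [hμ', h0, hc.1, hc.2]
      have hfin' : (Function.support (μ' i)).Finite :=
        Set.Finite.subset (((hμs i).2.1).union hμfin) hsupp
      have hpos' : ∀ x, 0 ≤ μ' i x := by
        intro x
        simp only [hμ', if_neg h0]
        exact div_nonneg (hnum x) (le_of_lt hrpos)
      refine ⟨hpos', hfin', ?_⟩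
      -- compute the sum over a common finset
      set F : Finset X := ((hμs i).2.1).toFinset ∪ hμfin.toFinset with hF
      have hsub1 : Function.support (μs i) ⊆ (F : Set X) := by
        intro x hx; simp [hF, Set.Finite.mem_toFinset, hx]
      have hsub2 : Function.support μ ⊆ (F : Set X) := by
        intro x hx; simp [hF, Set.Finite.mem_toFinset, hx]
      have hsub3 : Function.support (μ' i) ⊆ (F : Set X) := by
        intro x hx
        rcases hsupp hx with h | h
        · exact hsub1 h
        · exact hsub2 h
      have e1 : ∑ᶠ x, μ' i x = ∑ x ∈ F, μ' i x :=
        finsum_eq_sum_of_support_subset _ hsub3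
      have e2 : (1:ℝ) = ∑ x ∈ F, μs i x := by
        rw [← (hμs i).2.2]; exact finsum_eq_sum_of_support_subset _ hsub1
      have e3 : (1:ℝ) = ∑ x ∈ F, μ x := by
        rw [← hμsum]; exact finsum_eq_sum_of_support_subset _ hsub2
      rw [e1]
      have : ∑ x ∈ F, μ' i x = (∑ x ∈ F, μs i x - (1 - r i) * ∑ x ∈ F, μ x) / r i := by
        rw [Finset.mul_sum, ← Finset.sum_sub_distrib, Finset.sum_div]
        apply Finset.sum_congr rfl
        intro x _
        simp [hμ', h0]
      rw [this, ← e2, ← e3]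
      field_simp
      ring
  · -- the convex combination equation
    intro i x
    by_cases h0 : r i = 0
    · simp only [hμ', h0, if_true]
      have h01 : (0:ℝ) ∈ S i := by
        refine ⟨by norm_num, fun y => ?_⟩
        have hrm := (hrmem i).2 y
        rw [h0] at hrm
        simpa using hrm
      have heq := eq_of_le_of_finsum_eq hμfin (hμs i).2.1
        (fun y => by simpa using h01.2 y) (by rw [hμsum, (hμs i).2.2])
      rw [← heq x]; ring
    · simp only [hμ', if_neg h0]
      field_simp
      ring
  · -- r i → 0
    rw [Metric.tendsto_atTop]
    intro ε hε
    set ε' : ℝ := min (ε / 2) 1 with hε'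
    have hε'pos : 0 < ε' := lt_min (by linarith) one_pos
    obtain ⟨N, hN⟩ := hconv (ε' * m) (mul_pos hε'pos hmpos)
    refine ⟨N, fun i hi => ?_⟩
    have hmem : ε' ∈ S i := by
      refine ⟨⟨le_of_lt hε'pos, min_le_right _ _⟩, fun x => ?_⟩
      by_cases hx : μ x = 0
      · rw [hx, mul_zero]; exact (hμs i).1 x
      · have h1 := hN i hi x
        have h2 : μ x - μs i x < ε' * m := (abs_lt.1 h1).2 |> fun h => by
          have := (abs_lt.1 h1).1; linarith
        have h3 : ε' * m ≤ ε' * μ x :=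
          mul_le_mul_of_nonneg_left (hmle x hx) (le_of_lt hε'pos)
        nlinarith
    have hle : r i ≤ ε' := csInf_le (hSbdd i) hmem
    have h0 : 0 ≤ r i := (hr01 i).1
    rw [Real.dist_eq, sub_zero, abs_of_nonneg h0]
    calc r i ≤ ε' := hle
      _ ≤ ε / 2 := min_le_left _ _
      _ < ε := by linarith
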